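/- arXiv:1111.5604 — 5 statements merged into one kernel-verified Lean document; each statement's English description precedes it below -/
import Mathlib

section
/- Let Σ be a finite totally ordered alphabet, let q ≥ 2 be a natural number, and let u be a uniformly recurrent right infinite word over Σ. If for some natural number N the word u has at least q distinct subwords of length N, then u contains a strongly q-decomposable finite subword. -/
/-- Degree-lexicographic order on words: compare first by length, then lexicographically. -/
def DegLexLT {α : Type*} [LinearOrder α] (v w : List α) : Prop :=
  v.length < w.length ∨ (v.length = w.length ∧ List.Lex (· < ·) v w)

/-- `w` is strongly `q`-decomposable: `w = w_1 ⋯ w_q` with all `w_i` nonempty,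
`w ≻ w_{σ(1)} ⋯ w_{σ(q)}` in degree-lex order for every non-identity permutation `σ`,
and `(q - 1) * length(w_i) < length(w)` for every `i`. -/
def IsStronglyQDecomp {α : Type*} [LinearOrder α] (q : ℕ) (w : List α) : Prop :=
  ∃ f : Fin q → List α, (∀ i, f i ≠ []) ∧ w = (List.ofFn f).flatten ∧
    (∀ σ : Equiv.Perm (Fin q), σ ≠ 1 → DegLexLT ((List.ofFn (f ∘ ⇑σ)).flatten) w) ∧
    ∀ i, (q - 1) * (f i).length < w.length

/-- The finite block of `u` of length `n` starting at position `i`. -/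
def SubwordAt {α : Type*} (u : ℕ → α) (i n : ℕ) : List α :=
  (List.range n).map fun j => u (i + j)

/-- `v` is a finite subword (factor) of the right infinite word `u`. -/
def IsFactorOf {α : Type*} (u : ℕ → α) (v : List α) : Prop :=
  ∃ i : ℕ, v = SubwordAt u i v.length

/-- `u` is uniformly recurrent: every subword `v` of `u` occurs in every block
`u(i) u(i+1) ⋯ u(i+N)` for some `N` depending only on `v`. -/
def UniformlyRecurrent {α : Type*} (u : ℕ → α) : Prop :=
  ∀ v : List α, IsFactorOf u v → ∃ N : ℕ, ∀ i : ℕ, v <:+: SubwordAt u i (N + 1)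

namespace StrongAux

variable {α : Type*}

lemma length_subwordAt (u : ℕ → α) (i n : ℕ) : (SubwordAt u i n).length = n := by
  simp [SubwordAt]

lemma getElem_subwordAt (u : ℕ → α) (i n k : ℕ) (h : k < (SubwordAt u i n).length) :
    (SubwordAt u i n)[k] = u (i + k) := by
  simp [SubwordAt]

lemma subwordAt_append (u : ℕ → α) (i a b : ℕ) :
    SubwordAt u i a ++ SubwordAt u (i + a) b = SubwordAt u i (a + b) := by
  simp only [SubwordAt, List.range_add, List.map_append, List.map_map]
  congr 1
  apply List.map_congr_left
  intro x _
  simp [Function.comp, add_assoc]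

lemma drop_take_subwordAt (u : ℕ → α) (i L s m : ℕ) (h : s + m ≤ L) :
    ((SubwordAt u i L).drop s).take m = SubwordAt u (i + s) m := by
  apply List.ext_getElem
  · simp [length_subwordAt]; omega
  · intro n h1 h2
    rw [List.getElem_take, List.getElem_drop, getElem_subwordAt, getElem_subwordAt]
    ring_nf

lemma take_subwordAt (u : ℕ → α) (i L m : ℕ) (h : m ≤ L) :
    (SubwordAt u i L).take m = SubwordAt u i m := by
  have := drop_take_subwordAt u i L 0 m (by omega)
  simpa using this

lemma exists_occ {u : ℕ → α} {v : List α} {i L : ℕ} (h : v <:+: SubwordAt u i L) :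
    ∃ p, i ≤ p ∧ p + v.length ≤ i + L ∧ v = SubwordAt u p v.length := by
  obtain ⟨s, t, hst⟩ := h
  have hL : s.length + (v.length + t.length) = L := by
    have := congrArg List.length hst
    simpa [length_subwordAt] using this
  refine ⟨i + s.length, by omega, by omega, ?_⟩
  have h1 : (SubwordAt u i L).drop s.length = v ++ t := by
    rw [← hst, List.append_assoc, List.drop_left]
  have h2 : v = ((SubwordAt u i L).drop s.length).take v.length := by
    rw [h1, List.take_left]
  rw [drop_take_subwordAt u i L s.length v.length (by omega)] at h2
  exact h2

lemma lex_append {r : α → α → Prop} :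
    ∀ {a b : List α}, List.Lex r a b → a.length = b.length →
      ∀ (x y : List α), List.Lex r (a ++ x) (b ++ y) := by
  intro a b h
  induction h with
  | nil => intro hl; simp at hl
  | @cons a l₁ l₂ h ih =>
      intro hl x y
      exact List.Lex.cons (ih (by simpa using hl) x y)
  | rel h => intro _ x y; exact List.Lex.rel h

lemma lex_append_left {r : α → α → Prop} (p : List α) {a b : List α}
    (h : List.Lex r a b) : List.Lex r (p ++ a) (p ++ b) := by
  induction p with
  | nil => simpa
  | cons c p ih => exact List.Lex.cons ih

lemma lex_flatten {r : α → α → Prop} :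
    ∀ (n : ℕ) (g f : Fin n → List α) (i : Fin n),
      (∀ m : Fin n, (m : ℕ) < (i : ℕ) → g m = f m) →
      (∃ x y x' y', g i = x ++ x' ∧ f i = y ++ y' ∧ x.length = y.length ∧ List.Lex r x y) →
      List.Lex r (List.ofFn g).flatten (List.ofFn f).flatten := by
  intro n
  induction n with
  | zero => intro g f i; exact absurd i.isLt (by omega)
  | succ n ih =>
      intro g f i heq hdiff
      rw [List.ofFn_succ, List.ofFn_succ, List.flatten_cons, List.flatten_cons]
      rcases Fin.eq_zero_or_eq_succ i with rfl | ⟨j, rfl⟩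
      · obtain ⟨x, y, x', y', hg, hf, hlen, hlex⟩ := hdiff
        rw [hg, hf, List.append_assoc, List.append_assoc]
        exact lex_append hlex hlen _ _
      · have h0 : g 0 = f 0 := heq 0 (by simpa using j.succ_pos)
        rw [h0]
        refine lex_append_left _ ?_
        refine ih (fun m => g m.succ) (fun m => f m.succ) j ?_ ?_
        · intro m hm
          exact heq m.succ (by simpa using Nat.succ_lt_succ hm)
        · obtain ⟨x, y, x', y', hg, hf, hlen, hlex⟩ := hdiff
          exact ⟨x, y, x', y', hg, hf, hlen, hlex⟩

def seqRec (a : ℕ) (g : ℕ → ℕ → ℕ) : ℕ → ℕ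
  | 0 => a
  | n + 1 => g n (seqRec a g n)

lemma flatten_ofFn_subwordAt (u : ℕ → α) (j : ℕ → ℕ) (mono : ∀ k, j k ≤ j (k + 1)) :
    ∀ n, (List.ofFn fun k : Fin n => SubwordAt u (j k) (j (k + 1) - j k)).flatten
      = SubwordAt u (j 0) (j n - j 0) := by
  have mono' : ∀ a b, a ≤ b → j a ≤ j b := by
    intro a b hab
    induction b with
    | zero => simpa [Nat.le_zero.mp hab]
    | succ b ihb =>
        rcases Nat.lt_or_ge a (b+1) with h | h
        · exact le_trans (ihb (by omega)) (mono b)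
        · have : a = b + 1 := by omega
          simp [this]
  intro n
  induction n with
  | zero => simp [SubwordAt]
  | succ n ihn =>
      rw [List.ofFn_succ', List.concat_eq_append, List.flatten_concat]
      have : (List.ofFn fun i : Fin n =>
          SubwordAt u (j (i.castSucc)) (j ((i.castSucc : ℕ) + 1) - j i.castSucc)).flatten
          = SubwordAt u (j 0) (j n - j 0) := by
        simpa using ihn
      rw [this]
      simp only [Fin.val_last]
      have h1 : j 0 ≤ j n := mono' 0 n (by omega)
      have h2 : j n ≤ j (n + 1) := mono n
      have := subwordAt_append u (j 0) (j n - j 0) (j (n + 1) - j n)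
      rw [show j 0 + (j n - j 0) = j n by omega] at this
      rw [this, show j n - j 0 + (j (n + 1) - j n) = j (n + 1) - j 0 by omega]

end StrongAux


/-- If a uniformly recurrent right infinite word `u` over a finite ordered alphabet has
at least `q ≥ 2` distinct subwords of some length `N`, then `u` contains a strongly
`q`-decomposable finite subword. -/
theorem uniformlyRecurrent_contains_strongly_decomposable
    {σ : Type*} [Fintype σ] [LinearOrder σ]
    (q : ℕ) (hq : 2 ≤ q) (u : ℕ → σ) (hu : UniformlyRecurrent u)
    (N : ℕ) (S : Finset (List σ)) (hcard : q ≤ S.card)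
    (hS : ∀ v ∈ S, v.length = N ∧ IsFactorOf u v) :
    ∃ v : List σ, IsFactorOf u v ∧ IsStronglyQDecomp q v := by
  classical
  open StrongAux in
  -- N ≥ 1
  have hN : 1 ≤ N := by
    by_contra h
    have hN0 : N = 0 := by omega
    have : S ⊆ {[]} := by
      intro v hv
      have := (hS v hv).1
      simp [hN0, List.length_eq_zero_iff] at this
      simp [this]
    have := Finset.card_le_card this
    simp at this
    omega
  obtain ⟨S', hsub, hScard⟩ := Finset.exists_subset_card_eq hcard
  set emb := S'.orderEmbOfFin hScard with hemb
  set T : Fin q → List σ := fun k => emb k.rev with hT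
  have hTmem : ∀ k, T k ∈ S := fun k => hsub (S'.orderEmbOfFin_mem hScard k.rev)
  have hTlen : ∀ k, (T k).length = N := fun k => (hS _ (hTmem k)).1
  have hTfac : ∀ k, IsFactorOf u (T k) := fun k => (hS _ (hTmem k)).2
  have hTlex : ∀ k l : Fin q, k < l → List.Lex (· < ·) (T l) (T k) := by
    intro k l h
    exact (OrderEmbedding.strictMono emb) (by simpa using Fin.rev_lt_rev.mpr h)
  choose R hR using fun k : Fin q => hu _ (hTfac k)
  set K := (Finset.univ.sup R) + 1 with hKdef
  have hK : ∀ (k : Fin q) (i : ℕ), T k <:+: SubwordAt u i K := by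
    intro k i
    refine (hR k i).trans ?_
    have hle : R k + 1 ≤ K := by
      have := Finset.le_sup (f := R) (Finset.mem_univ k); omega
    refine List.IsPrefix.isInfix ⟨SubwordAt u (i + (R k + 1)) (K - (R k + 1)), ?_⟩
    rw [StrongAux.subwordAt_append, Nat.add_sub_cancel' hle]
  have hstep : ∀ (k : Fin q) (i : ℕ), ∃ p, i ≤ p ∧ p + N ≤ i + K ∧ SubwordAt u p N = T k := by
    intro k i
    obtain ⟨p, hp1, hp2, hp3⟩ := StrongAux.exists_occ (hK k i)
    rw [hTlen k] at hp2 hp3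
    exact ⟨p, hp1, hp2, hp3.symm⟩
  choose step hstep1 hstep2 hstep3 using hstep
  set M := q * K + N + 1 with hM
  have hq0 : 0 < q := by omega
  set j : ℕ → ℕ := StrongAux.seqRec (step ⟨0, hq0⟩ 0)
    (fun k x => if h : k + 1 < q then step ⟨k + 1, h⟩ (x + M) else x + M) with hjdef
  have hjsucc : ∀ k, j (k + 1) =
      if h : k + 1 < q then step ⟨k + 1, h⟩ (j k + M) else j k + M := fun k => rfl
  have hocc : ∀ (k : ℕ) (h : k < q), SubwordAt u (j k) N = T ⟨k, h⟩ := by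
    intro k h
    cases k with
    | zero => exact hstep3 ⟨0, hq0⟩ 0
    | succ k => rw [hjsucc, dif_pos h]; exact hstep3 _ _
  have hgap : ∀ k, j k + M ≤ j (k + 1) ∧ j (k + 1) ≤ j k + M + K := by
    intro k
    rw [hjsucc]
    split
    · exact ⟨hstep1 _ _, by have := hstep2 (⟨k+1, by assumption⟩ : Fin q) (j k + M); omega⟩
    · omega
  have hmono : ∀ k, j k ≤ j (k + 1) := fun k => le_trans (by omega) (hgap k).1
  set d : ℕ → ℕ := fun k => j (k + 1) - j k with hd
  set f : Fin q → List σ := fun k => SubwordAt u (j k) (d k) with hf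
  set w := SubwordAt u (j 0) (j q - j 0) with hw
  have hflat : (List.ofFn f).flatten = w :=
    StrongAux.flatten_ofFn_subwordAt u j hmono q
  have hdlow : ∀ k, M ≤ d k := fun k => by have := (hgap k).1; simp only [hd]; omega
  have hdhigh : ∀ k, d k ≤ M + K := fun k => by
    have h1 := (hgap k).1; have h2 := (hgap k).2; simp only [hd]; omega
  have hflen : ∀ k : Fin q, (f k).length = d k := fun k => StrongAux.length_subwordAt _ _ _
  have hwlen : w.length = j q - j 0 := StrongAux.length_subwordAt _ _ _
  have hjlow : ∀ n, j 0 + n * M ≤ j n := by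
    intro n
    induction n with
    | zero => simp
    | succ n ihn => have := (hgap n).1; have : j n + M ≤ j (n+1) := this;
                    calc j 0 + (n+1) * M = (j 0 + n * M) + M := by ring
                    _ ≤ j n + M := by omega
                    _ ≤ j (n+1) := this
  have hwbig : q * M ≤ w.length := by
    rw [hwlen]
    have := hjlow q
    omega
  have hprefix : ∀ k : Fin q, f k = T k ++ (f k).drop N := by
    intro k
    conv_lhs => rw [← List.take_append_drop N (f k)]
    congr 1
    rw [hf]
    simp only
    rw [StrongAux.take_subwordAt u (j k) (d k) N (le_trans (by omega) (hdlow k))]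
    exact hocc k k.isLt
  refine ⟨w, ⟨j 0, by rw [hwlen]⟩, f, ?_, hflat.symm, ?_, ?_⟩
  · intro k
    have : (f k).length ≠ 0 := by rw [hflen k]; have := hdlow k; omega
    exact fun h => this (by simp [h])
  · intro π hπ
    set s : Finset (Fin q) := Finset.univ.filter fun i => π i ≠ i with hs
    have hex : ∃ x, π x ≠ x := by
      by_contra h
      push_neg at h
      exact hπ (Equiv.ext fun x => by simp [h x])
    have hsne : s.Nonempty := by
      obtain ⟨x, hx⟩ := hex
      exact ⟨x, by simp [hs, hx]⟩
    set i := s.min' hsne with hi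
    have hine : π i ≠ i := by
      have := s.min'_mem hsne
      simp [hs] at this
      exact this
    have hmin : ∀ m : Fin q, m < i → π m = m := by
      intro m hm
      by_contra hc
      exact absurd (s.min'_le m (by simp [hs, hc])) (not_le.mpr hm)
    have hgt : i < π i := by
      rcases lt_trichotomy (π i) i with h | h | h
      · exfalso
        have := hmin (π i) h
        exact hine (π.injective this)
      · exact absurd h hine
      · exact h
    refine Or.inr ⟨?_, ?_⟩
    · rw [← hflat, List.length_flatten, List.length_flatten, List.map_ofFn, List.map_ofFn,
        List.sum_ofFn, List.sum_ofFn]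
      exact Equiv.sum_comp π (fun k => ((f k).length))
    · rw [← hflat]
      refine StrongAux.lex_flatten q (f ∘ π) f i ?_ ?_
      · intro m hm
        have : π m = m := hmin m (by exact_mod_cast hm)
        simp [Function.comp, this]
      · refine ⟨T (π i), T i, (f (π i)).drop N, (f i).drop N, ?_, ?_, ?_, ?_⟩
        · exact hprefix (π i)
        · exact hprefix i
        · rw [hTlen, hTlen]
        · exact hTlex i (π i) hgt
  · intro k
    rw [hflen k]
    have h1 : d k ≤ M + K := hdhigh k
    have hMK : (q - 1) * K < M := by
      have h3 : (q - 1) * K ≤ q * K := Nat.mul_le_mul_right K (Nat.sub_le q 1)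
      omega
    have h4 : (q - 1) * d (k : ℕ) ≤ (q - 1) * M + (q - 1) * K := by
      calc (q - 1) * d (k : ℕ) ≤ (q - 1) * (M + K) := Nat.mul_le_mul_left _ h1
        _ = (q - 1) * M + (q - 1) * K := by ring
    have h5 : (q - 1) * M + M ≤ q * M := by
      rw [Nat.sub_one_mul]
      have : M ≤ q * M := Nat.le_mul_of_pos_left M hq0
      omega
    omega
end

section
/- Let Σ be a finite totally ordered alphabet and let w_1 ≻ w_2 ≻ ⋯ ≻ w_q be q distinct words over Σ, all of the same length N, strictly decreasing in the lexicographic order. Let u_1, …, u_q be words over Σ such that w_i is a prefix of u_i for each i ∈ {1, …, q}. Then for every non-identity permutation σ of {1, …, q} one has u_1 u_2 ⋯ u_q ≻ u_{σ(1)} u_{σ(2)} ⋯ u_{σ(q)} in the degree-lexicographic order. -/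
lemma myLexAppendLeft {α} {r : α → α → Prop} (c : List α) {s t : List α}
    (h : List.Lex r s t) : List.Lex r (c ++ s) (c ++ t) := by
  induction c with
  | nil => simpa
  | cons a c ih => exact List.Lex.cons ih

lemma myLexAppend {α} [LinearOrder α] {x y : List α}
    (h : List.Lex (· < ·) x y) :
    x.length = y.length → ∀ a b : List α, List.Lex (· < ·) (x ++ a) (y ++ b) := by
  induction h with
  | nil => intro hlen; simp at hlen
  | @cons a l₁ l₂ h ih =>
      intro hlen a b
      exact List.Lex.cons (ih (by simpa using hlen) a b)
  | rel h => intro _ a b; exact List.Lex.rel h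



/-- If `w_1 ≻ w_2 ≻ ⋯ ≻ w_q` are words of the same length `N`, strictly decreasing in the
lexicographic order, and `w_i` is a prefix of `u_i` for each `i`, then for every
non-identity permutation `τ` one has `u_1 ⋯ u_q ≻ u_{τ(1)} ⋯ u_{τ(q)}` in degree-lex
order. -/
theorem concat_gt_of_prefixes_lex_decreasing
    {σ : Type*} [LinearOrder σ] (q N : ℕ) (w u : Fin q → List σ)
    (hlen : ∀ i, (w i).length = N)
    (hdec : ∀ i j : Fin q, i < j → List.Lex (· < ·) (w j) (w i))
    (hpre : ∀ i, w i <+: u i) :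
    ∀ τ : Equiv.Perm (Fin q), τ ≠ 1 →
      DegLexLT ((List.ofFn (u ∘ ⇑τ)).flatten) ((List.ofFn u).flatten) := by
  intro τ hτ
  -- lengths equal
  have hL : (((List.ofFn (u ∘ ⇑τ)).flatten).length = ((List.ofFn u).flatten).length) := by
    simp only [List.length_flatten, List.map_ofFn, List.sum_ofFn]
    exact Equiv.sum_comp τ (fun i => (u i).length)
  refine Or.inr ⟨hL, ?_⟩
  -- minimal moved index
  have hex : ∃ i, τ i ≠ i := by
    by_contra h
    push_neg at h
    exact hτ (Equiv.ext h)
  obtain ⟨i1, hi1⟩ := hex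
  set S : Finset (Fin q) := Finset.univ.filter (fun i => τ i ≠ i) with hS
  have hSne : S.Nonempty := ⟨i1, by simp [hS, hi1]⟩
  set i₀ : Fin q := S.min' hSne with hi₀
  have hi₀mem : τ i₀ ≠ i₀ := by
    have := S.min'_mem hSne
    simpa [hS] using this
  have hfix : ∀ j : Fin q, j < i₀ → τ j = j := by
    intro j hj
    by_contra hne
    exact absurd (S.min'_le j (by simp [hS, hne])) (not_le.mpr hj)
  have hgt : i₀ < τ i₀ := by
    rcases lt_trichotomy (τ i₀) i₀ with h | h | h
    · exact absurd (τ.injective (hfix _ h)) hi₀mem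
    · exact absurd h hi₀mem
    · exact h
  set k : ℕ := (i₀ : ℕ) with hk
  have hkq : k < q := i₀.2
  -- take parts agree
  have htake : (List.ofFn (u ∘ ⇑τ)).take k = (List.ofFn u).take k := by
    apply List.ext_getElem
    · simp
    · intro n h1 h2
      simp only [List.getElem_take, List.getElem_ofFn, Function.comp_apply]
      have hn : n < k := by simpa using (lt_of_lt_of_le h1 (by simp))
      congr 1
      exact hfix _ (by simpa [Fin.lt_def] using hn)
  have hdrop1 : (List.ofFn (u ∘ ⇑τ)).drop k
      = (u (τ i₀)) :: (List.ofFn (u ∘ ⇑τ)).drop (k + 1) := by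
    rw [List.drop_eq_getElem_cons (by simpa using hkq)]
    simp
    rfl
  have hdrop2 : (List.ofFn u).drop k = (u i₀) :: (List.ofFn u).drop (k + 1) := by
    rw [List.drop_eq_getElem_cons (by simpa using hkq)]
    simp
    rfl
  -- decompose flattens
  have e1 : (List.ofFn (u ∘ ⇑τ)).flatten
      = ((List.ofFn u).take k).flatten ++ (u (τ i₀) ++ ((List.ofFn (u ∘ ⇑τ)).drop (k+1)).flatten) := by
    conv_lhs => rw [← List.take_append_drop k (List.ofFn (u ∘ ⇑τ))]
    rw [List.flatten_append, htake, hdrop1]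
    simp
  have e2 : (List.ofFn u).flatten
      = ((List.ofFn u).take k).flatten ++ (u i₀ ++ ((List.ofFn u).drop (k+1)).flatten) := by
    conv_lhs => rw [← List.take_append_drop k (List.ofFn u)]
    rw [List.flatten_append, hdrop2]
    simp
  rw [e1, e2]
  apply myLexAppendLeft
  obtain ⟨s₁, hs₁⟩ := hpre (τ i₀)
  obtain ⟨s₂, hs₂⟩ := hpre i₀
  rw [← hs₁, ← hs₂, List.append_assoc, List.append_assoc]
  exact myLexAppend (hdec i₀ (τ i₀) hgt) (by rw [hlen, hlen]) _ _
end

section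
/- Let R be an associative (not necessarily commutative) ring, let d ≥ 1 be a natural number, and let a_1, …, a_d ∈ R. Then ∑_{S ⊆ {1, …, d}} (−1)^{d−|S|} (∑_{i ∈ S} a_i)^d = ∑_{σ ∈ S_d} a_{σ(1)} a_{σ(2)} ⋯ a_{σ(d)}, where the outer sum on the left runs over all subsets S of {1, …, d} (with the empty sum equal to 0) and the sum on the right runs over all permutations σ of {1, …, d}. -/
open Finset

/-- Noncommutative expansion of a power of a sum as a sum over tuples. -/
lemma aux_sum_pow {R : Type*} [Ring R] {ι : Type*} [DecidableEq ι] (s : Finset ι) (b : ι → R) :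
    ∀ n : ℕ, (∑ i ∈ s, b i) ^ n
      = ∑ f ∈ Fintype.piFinset (fun _ : Fin n => s), (List.ofFn (b ∘ f)).prod
  | 0 => by simp
  | n + 1 => by
    rw [pow_succ', aux_sum_pow s b n, Finset.sum_mul_sum]
    rw [← Finset.sum_product']
    refine Finset.sum_bij' (fun p _ => Fin.cons p.1 p.2)
      (fun g _ => (g 0, Fin.tail g)) ?_ ?_ ?_ ?_ ?_
    · rintro ⟨i, f⟩ hp
      simp only [Finset.mem_product, Fintype.mem_piFinset] at hp ⊢
      intro k
      refine Fin.cases ?_ ?_ k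
      · simpa using hp.1
      · intro j; simpa using hp.2 j
    · intro g hg
      simp only [Fintype.mem_piFinset] at hg
      simp only [Finset.mem_product, Fintype.mem_piFinset]
      exact ⟨hg 0, fun j => hg j.succ⟩
    · rintro ⟨i, f⟩ _
      simp [Fin.tail_cons]
    · intro g _
      exact Fin.cons_self_tail g
    · rintro ⟨i, f⟩ _
      rw [List.ofFn_succ]
      simp [Fin.tail, Function.comp_def]

/-- Alternating-sign sum over supersets of `T` vanishes unless `T = univ`. -/
lemma aux_coeff {R : Type*} [Ring R] {d : ℕ} (T : Finset (Fin d)) :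
    ∑ S ∈ (Finset.univ : Finset (Fin d)).powerset,
        (if T ⊆ S then ((-1 : R) ^ (d - S.card)) else 0)
      = if T = Finset.univ then 1 else 0 := by
  have key : ∑ S ∈ (Finset.univ : Finset (Fin d)).powerset,
      (if T ⊆ S then ((-1 : R) ^ (d - S.card)) else 0)
      = ∑ U ∈ Tᶜ.powerset, (-1 : R) ^ U.card := by
    rw [← Finset.sum_filter]
    refine Finset.sum_nbij' (fun S => Sᶜ) (fun U => Uᶜ) ?_ ?_ ?_ ?_ ?_
    · intro S hS
      simp only [Finset.mem_filter, Finset.mem_powerset] at hS ⊢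
      exact Finset.compl_subset_compl.mpr hS.2
    · intro U hU
      simp only [Finset.mem_powerset] at hU
      simp only [Finset.mem_filter, Finset.mem_powerset]
      exact ⟨Finset.subset_univ _, by
        have := Finset.compl_subset_compl.mpr hU
        simpa using this⟩
    · intro S _; simp
    · intro U _; simp
    · intro S hS
      congr 1
      rw [Finset.card_compl, Fintype.card_fin]
  rw [key]
  have : ((∑ U ∈ Tᶜ.powerset, (-1 : ℤ) ^ U.card : ℤ) : R)
      = ∑ U ∈ Tᶜ.powerset, (-1 : R) ^ U.card := by push_cast; rfl
  rw [← this, Finset.sum_powerset_neg_one_pow_card]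
  by_cases h : T = Finset.univ
  · simp [h]
  · have : Tᶜ ≠ ∅ := by
      simp only [ne_eq, ← Finset.compl_eq_empty_iff] at *
      simpa [Finset.compl_eq_empty_iff] using h
    simp [this, h]


/-- In any associative ring, for `d ≥ 1` and elements `a_1, …, a_d`,
`∑_{S ⊆ {1,…,d}} (−1)^{d−|S|} (∑_{i ∈ S} a_i)^d = ∑_{σ ∈ S_d} a_{σ(1)} ⋯ a_{σ(d)}`. -/
theorem sum_subsets_neg_one_pow_mul_sum_pow_eq_sum_perm_prod
    {R : Type*} [Ring R] (d : ℕ) (hd : 1 ≤ d) (a : Fin d → R) :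
    ∑ S ∈ (Finset.univ : Finset (Fin d)).powerset,
        (-1 : R) ^ (d - S.card) * (∑ i ∈ S, a i) ^ d
      = ∑ σ : Equiv.Perm (Fin d), (List.ofFn (a ∘ ⇑σ)).prod := by
  classical
  have hpi : ∀ S : Finset (Fin d), Fintype.piFinset (fun _ : Fin d => S)
      = Finset.univ.filter (fun f : Fin d → Fin d => Finset.image f Finset.univ ⊆ S) := by
    intro S; ext f
    simp [Fintype.mem_piFinset, Finset.image_subset_iff]
  have hbij : ∀ f : Fin d → Fin d, Finset.image f Finset.univ = Finset.univ →
      Function.Bijective f := by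
    intro f hf
    rw [← Finite.surjective_iff_bijective]
    intro y
    have hy : y ∈ Finset.image f Finset.univ := by rw [hf]; exact Finset.mem_univ y
    simpa using Finset.mem_image.mp hy
  calc
    ∑ S ∈ (Finset.univ : Finset (Fin d)).powerset,
        (-1 : R) ^ (d - S.card) * (∑ i ∈ S, a i) ^ d
      = ∑ S ∈ (Finset.univ : Finset (Fin d)).powerset, ∑ f : Fin d → Fin d,
          (if Finset.image f Finset.univ ⊆ S then ((-1 : R) ^ (d - S.card)) else 0)
            * (List.ofFn (a ∘ f)).prod := by
        refine Finset.sum_congr rfl fun S _ => ?_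
        rw [aux_sum_pow S a d, hpi S, Finset.mul_sum, Finset.sum_filter]
        exact Finset.sum_congr rfl fun f _ => by rw [ite_mul, zero_mul]
    _ = ∑ f : Fin d → Fin d,
          (∑ S ∈ (Finset.univ : Finset (Fin d)).powerset,
            (if Finset.image f Finset.univ ⊆ S then ((-1 : R) ^ (d - S.card)) else 0))
            * (List.ofFn (a ∘ f)).prod := by
        rw [Finset.sum_comm]
        exact Finset.sum_congr rfl fun f _ => (Finset.sum_mul _ _ _).symm
    _ = ∑ f : Fin d → Fin d,
          (if Finset.image f Finset.univ = Finset.univ then (1 : R) else 0)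
            * (List.ofFn (a ∘ f)).prod := by
        simp only [aux_coeff]
    _ = ∑ f ∈ Finset.univ.filter
          (fun f : Fin d → Fin d => Finset.image f Finset.univ = Finset.univ),
          (List.ofFn (a ∘ f)).prod := by
        rw [Finset.sum_filter]
        exact Finset.sum_congr rfl fun f _ => boole_mul _ _
    _ = ∑ σ : Equiv.Perm (Fin d), (List.ofFn (a ∘ ⇑σ)).prod := by
        refine Finset.sum_bij'
          (fun (f : Fin d → Fin d) hf => Equiv.ofBijective f (hbij f (by simpa using hf)))
          (fun (σ : Equiv.Perm (Fin d)) _ => ⇑σ) ?_ ?_ ?_ ?_ ?_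
        · intro f hf; exact Finset.mem_univ _
        · intro σ _
          simp [Finset.image_univ_equiv]
        · intro f hf
          rfl
        · intro σ _
          exact Equiv.ext fun x => rfl
        · intro f hf
          rfl
end

section
/- Let D be a division ring with center k such that the dimension of D over k is n^2, and let x ∈ D be an element such that 1, x, …, x^{n-1} are linearly independent over k and the subfield k(x) generated by k and x is a maximal subfield of D. If c_0, …, c_{n-1} ∈ D satisfy ∑_{i=0}^{n-1} c_i α x^i = 0 for every α ∈ D, then c_0 = c_1 = ⋯ = c_{n-1} = 0. -/
/-- A (not necessarily central) subfield of a division ring `D`: a subring that is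
commutative and closed under inverses. -/
def IsCommSubfield {D : Type*} [DivisionRing D] (K : Subring D) : Prop :=
  (∀ x ∈ K, ∀ y ∈ K, x * y = y * x) ∧ ∀ x ∈ K, x⁻¹ ∈ K

/-- Let `D` be a division ring with center `k`, `dim_k D = n ^ 2`, and let `x ∈ D` be such
that `1, x, …, x^{n-1}` are linearly independent over `k` and the subfield `k(x)` (the
smallest subfield containing `k` and `x`) is a maximal subfield of `D`. If
`c_0, …, c_{n-1} ∈ D` satisfy `∑ c_i α x^i = 0` for every `α ∈ D`, then all `c_i = 0`. -/
theorem operators_linearly_independent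
    (D : Type*) [DivisionRing D] (n : ℕ)
    (hdim : Module.rank (Subring.center D) D = ((n ^ 2 : ℕ) : Cardinal))
    (x : D)
    (hind : LinearIndependent (Subring.center D) fun i : Fin n => x ^ (i : ℕ))
    (L : Subring D) (hL : IsCommSubfield L)
    (hxL : x ∈ L) (hkL : Subring.center D ≤ L)
    (hleast : ∀ M : Subring D, IsCommSubfield M → Subring.center D ≤ M → x ∈ M → L ≤ M)
    (hmax : ∀ M : Subring D, IsCommSubfield M → L ≤ M → M = L)
    (c : Fin n → D)
    (hc : ∀ α : D, ∑ i : Fin n, c i * α * x ^ (i : ℕ) = 0) :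
    ∀ i, c i = 0 := by
  classical
  suffices h : ∀ s : ℕ, ∀ c : Fin n → D,
      (Finset.univ.filter fun i => c i ≠ 0).card ≤ s →
      (∀ α : D, ∑ i : Fin n, c i * α * x ^ (i : ℕ) = 0) → ∀ i, c i = 0 by
    exact h _ c le_rfl hc
  intro s
  induction s with
  | zero =>
    intro c hcard _ i
    by_contra hi
    have : i ∈ Finset.univ.filter fun i => c i ≠ 0 := by simp [hi]
    have := Finset.card_pos.mpr ⟨i, this⟩
    omega
  | succ s ih =>
    intro c hcard hc i
    by_contra hi
    set c' : Fin n → D := fun k => (c i)⁻¹ * c k with hc'def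
    have hc' : ∀ α, ∑ k : Fin n, c' k * α * x ^ (k : ℕ) = 0 := by
      intro α
      have h0 := hc α
      have : ∑ k : Fin n, c' k * α * x ^ (k : ℕ)
          = (c i)⁻¹ * ∑ k : Fin n, c k * α * x ^ (k : ℕ) := by
        rw [Finset.mul_sum]
        exact Finset.sum_congr rfl fun k _ => by simp [hc'def, mul_assoc]
      rw [this, h0, mul_zero]
    have hc'i : c' i = 1 := inv_mul_cancel₀ hi
    have hsubset : (Finset.univ.filter fun k => c' k ≠ 0)
        ⊆ Finset.univ.filter fun k => c k ≠ 0 := by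
      intro k hk
      simp only [Finset.mem_filter, Finset.mem_univ, true_and] at hk ⊢
      intro h0
      exact hk (by simp [hc'def, h0])
    have hcomm : ∀ d : D, ∀ k, d * c' k = c' k * d := by
      intro d
      have hnew : ∀ α, ∑ k : Fin n, (d * c' k - c' k * d) * α * x ^ (k : ℕ) = 0 := by
        intro α
        have h1 : ∑ k : Fin n, c' k * (d * α) * x ^ (k : ℕ) = 0 := hc' (d * α)
        have h2 : d * ∑ k : Fin n, c' k * α * x ^ (k : ℕ) = 0 := by rw [hc' α, mul_zero]
        rw [Finset.mul_sum] at h2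
        calc ∑ k : Fin n, (d * c' k - c' k * d) * α * x ^ (k : ℕ)
            = (∑ k : Fin n, d * (c' k * α * x ^ (k : ℕ)))
              - ∑ k : Fin n, c' k * (d * α) * x ^ (k : ℕ) := by
              rw [← Finset.sum_sub_distrib]
              exact Finset.sum_congr rfl fun k _ => by
                simp only [sub_mul, mul_assoc]
          _ = 0 := by rw [h1, h2, sub_zero]
      have hsub : (Finset.univ.filter fun k => (d * c' k - c' k * d) ≠ 0)
          ⊆ (Finset.univ.filter fun k => c' k ≠ 0).erase i := by
        intro k hk
        simp only [Finset.mem_filter, Finset.mem_univ, true_and] at hk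
        rw [Finset.mem_erase]
        constructor
        · rintro rfl
          exact hk (by rw [hc'i, mul_one, one_mul, sub_self])
        · simp only [Finset.mem_filter, Finset.mem_univ, true_and]
          intro h0
          exact hk (by rw [h0, mul_zero, zero_mul, sub_self])
      have hiin : i ∈ Finset.univ.filter fun k => c' k ≠ 0 := by
        simp [hc'i]
      have hcard' : (Finset.univ.filter fun k => (d * c' k - c' k * d) ≠ 0).card ≤ s := by
        have h1 := Finset.card_le_card hsub
        have h2 := Finset.card_erase_of_mem hiin
        have h3 := Finset.card_le_card hsubset
        omega
      have := ih _ hcard' hnew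
      intro k
      exact sub_eq_zero.mp (this k)
    have hcent : ∀ k, c' k ∈ Subring.center D := fun k =>
      Subring.mem_center_iff.mpr fun d => hcomm d k
    have hzero : ∑ k : Fin n,
        (⟨c' k, hcent k⟩ : Subring.center D) • x ^ (k : ℕ) = 0 := by
      have h1 := hc' 1
      rw [← h1]
      exact Finset.sum_congr rfl fun k _ => by
        simp [Subring.smul_def, mul_assoc]
    have := linearIndependent_iff'.mp hind Finset.univ
      (fun k => (⟨c' k, hcent k⟩ : Subring.center D)) hzero i (Finset.mem_univ i)
    have : c' i = 0 := congrArg Subtype.val this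
    rw [hc'i] at this
    exact one_ne_zero this
end

section
/- Let D be a division ring whose center is K and suppose that the dimension of D as a K-vector space is d^2. Then every element of D is algebraic over K of degree at most d; that is, for every x ∈ D there exists a nonzero polynomial over K of degree at most d that vanishes at x. -/
open Module Finset
open scoped Classical

section Aux

variable {D : Type*} [DivisionRing D]

/-- Artin–Whaples style independence: if `∑ i, x^i * u * c i = 0` for all `u`,
and the powers of `x` below `m` are independent over the center, then all `c i = 0`. -/
theorem aw_aux (x : D) {m : ℕ}
    (hpow : ∀ k : Fin m → Subring.center D,
      (∑ i : Fin m, (k i : D) * x ^ (i : ℕ)) = 0 → ∀ i, k i = 0) :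
    ∀ (n : ℕ) (c : Fin m → D),
      (Finset.univ.filter fun i => c i ≠ 0).card ≤ n →
      (∀ u : D, ∑ i : Fin m, x ^ (i : ℕ) * u * c i = 0) → ∀ i, c i = 0 := by
  intro n
  induction n with
  | zero =>
    intro c hc h i
    by_contra hci
    have : i ∈ Finset.univ.filter fun i => c i ≠ 0 := by simp [hci]
    have := Finset.card_pos.mpr ⟨i, this⟩
    omega
  | succ n ih =>
    intro c hc h
    by_cases hall : ∀ i, c i = 0
    · exact hall
    push_neg at hall
    obtain ⟨i₀, hi₀⟩ := hall
    exfalso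
    set a : D := (c i₀)⁻¹ with ha
    set c' : Fin m → D := fun i => c i * a with hc'
    have h' : ∀ u : D, ∑ i : Fin m, x ^ (i : ℕ) * u * c' i = 0 := by
      intro u
      have h1 := h u
      calc ∑ i : Fin m, x ^ (i : ℕ) * u * c' i
          = (∑ i : Fin m, x ^ (i : ℕ) * u * c i) * a := by
            rw [Finset.sum_mul]; exact Finset.sum_congr rfl fun i _ => by
              simp [hc', mul_assoc]
        _ = 0 := by rw [h1, zero_mul]
    have hc'i₀ : c' i₀ = 1 := mul_inv_cancel₀ hi₀
    have hzero : ∀ i, c i = 0 → c' i = 0 := fun i hi => by simp [hc', hi]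
    have hcomm : ∀ (v : D) (i : Fin m), c' i * v = v * c' i := by
      intro v i
      set e : Fin m → D := fun j => c' j * v - v * c' j with he
      have hesum : ∀ u : D, ∑ j : Fin m, x ^ (j : ℕ) * u * e j = 0 := by
        intro u
        have h1 := h' u
        have h2 := h' (u * v)
        calc ∑ j : Fin m, x ^ (j : ℕ) * u * e j
            = ∑ j : Fin m, ((x ^ (j : ℕ) * u * c' j) * v - x ^ (j : ℕ) * (u * v) * c' j) := by
              refine Finset.sum_congr rfl fun j _ => ?_
              simp only [he, mul_sub, mul_assoc]
          _ = (∑ j : Fin m, x ^ (j : ℕ) * u * c' j) * v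
              - ∑ j : Fin m, x ^ (j : ℕ) * (u * v) * c' j := by
              rw [Finset.sum_sub_distrib, Finset.sum_mul]
          _ = 0 := by rw [h1, h2, zero_mul, sub_zero]
      have hecard : (Finset.univ.filter fun j => e j ≠ 0).card ≤ n := by
        have hsub : (Finset.univ.filter fun j => e j ≠ 0) ⊆
            (Finset.univ.filter fun j => c j ≠ 0).erase i₀ := by
          intro j hj
          simp only [Finset.mem_filter, Finset.mem_univ, true_and] at hj
          rw [Finset.mem_erase]
          constructor
          · rintro rfl
            exact hj (by simp [he, hc'i₀])
          · simp only [Finset.mem_filter, Finset.mem_univ, true_and]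
            intro hcj
            exact hj (by simp [he, hzero j hcj])
        have hmem : i₀ ∈ Finset.univ.filter fun j => c j ≠ 0 := by simp [hi₀]
        have := Finset.card_le_card hsub
        rw [Finset.card_erase_of_mem hmem] at this
        omega
      have := ih e hecard hesum i
      rw [he] at this
      exact sub_eq_zero.mp this
    set k : Fin m → Subring.center D := fun i =>
      ⟨c' i, Subring.mem_center_iff.mpr fun g => (hcomm g i).symm⟩ with hk
    have hksum : (∑ i : Fin m, (k i : D) * x ^ (i : ℕ)) = 0 := by
      have h1 := h' 1
      calc ∑ i : Fin m, (k i : D) * x ^ (i : ℕ)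
          = ∑ i : Fin m, x ^ (i : ℕ) * (1 : D) * c' i := by
            refine Finset.sum_congr rfl fun i _ => ?_
            rw [mul_one]
            exact hcomm (x ^ (i : ℕ)) i
        _ = 0 := h1
    have := congrArg (Subtype.val) (hpow k hksum i₀)
    simp only [hk] at this
    rw [hc'i₀] at this
    exact one_ne_zero this

end Aux

section Instances

variable {D : Type*} [DivisionRing D]

noncomputable instance centralizerDivisionRing (x : D) :
    DivisionRing (Subring.centralizer ({x} : Set D)) :=
  DivisionRing.ofIsUnitOrEqZero (by
    rintro ⟨a, ha⟩
    rcases eq_or_ne a 0 with h | h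
    · right; ext; exact h
    · left
      have hax : a * x = x * a := (Subring.mem_centralizer_iff.mp ha x rfl).symm
      have hinv : a⁻¹ ∈ Subring.centralizer ({x} : Set D) := by
        rw [Subring.mem_centralizer_iff]
        rintro g rfl
        calc g * a⁻¹ = a⁻¹ * (a * g) * a⁻¹ := by
              rw [← mul_assoc, inv_mul_cancel₀ h, one_mul]
          _ = a⁻¹ * (g * a) * a⁻¹ := by rw [hax]
          _ = a⁻¹ * g := by rw [mul_assoc, mul_assoc, mul_inv_cancel₀ h, mul_one]
      exact isUnit_iff_exists.mpr ⟨⟨a⁻¹, hinv⟩,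
        by ext; simp [mul_inv_cancel₀ h], by ext; simp [inv_mul_cancel₀ h]⟩)

/-- The center embeds into the centralizer of `{x}`. -/
def centerToCentralizer (x : D) :
    Subring.center D →+* Subring.centralizer ({x} : Set D) where
  toFun k := ⟨(k : D), Subring.center_le_centralizer ({x} : Set D) k.2⟩
  map_one' := rfl
  map_mul' _ _ := rfl
  map_zero' := rfl
  map_add' _ _ := rfl

noncomputable instance centralizerAlgebra (x : D) :
    Algebra (Subring.center D) (Subring.centralizer ({x} : Set D)) :=
  RingHom.toAlgebra' (centerToCentralizer x) (by
    rintro k c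
    ext
    show (k : D) * (c : D) = (c : D) * (k : D)
    exact (Subring.mem_center_iff.mp k.2 (c : D)).symm)

instance centralizerTower (x : D) :
    IsScalarTower (Subring.center D) (Subring.centralizer ({x} : Set D)) D :=
  ⟨by
    rintro k c u
    show ((k • c : Subring.centralizer ({x} : Set D)) : D) * u = (k : D) * ((c : D) * u)
    have : ((k • c : Subring.centralizer ({x} : Set D)) : D) = (k : D) * (c : D) := rfl
    rw [this, mul_assoc]⟩

end Instances

set_option maxHeartbeats 1000000 in
/-- If `D` is a division ring with center `K = Z(D)` and `dim_K D = d ^ 2`, then every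
element of `D` is algebraic over `K` of degree at most `d`: there is a nonzero polynomial
over `K` of degree at most `d` vanishing at `x`. -/
theorem algebraic_of_degree_le_of_dim_eq_sq
    (D : Type*) [DivisionRing D] (d : ℕ)
    (hdim : Module.rank (Subring.center D) D = ((d ^ 2 : ℕ) : Cardinal)) (x : D) :
    ∃ p : Polynomial (Subring.center D), p ≠ 0 ∧ p.natDegree ≤ d ∧
      Polynomial.aeval x p = 0 := by
  classical
  set K := Subring.center D with hK
  have hfd : FiniteDimensional K D := FiniteDimensional.of_rank_eq_nat hdim
  have hfinrank : Module.finrank K D = d ^ 2 := Module.finrank_eq_of_rank_eq hdim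
  have hd0 : 0 < d := by
    rcases Nat.eq_zero_or_pos d with rfl | h
    · exfalso
      have h1 : (0 : Cardinal) < Module.rank K D := rank_pos
      rw [hdim] at h1
      simp at h1
    · exact h
  have hint : IsIntegral K x := IsIntegral.of_finite K x
  set p := minpoly K x with hp
  set m := p.natDegree with hm
  refine ⟨p, minpoly.ne_zero hint, ?_, minpoly.aeval _ _⟩
  -- powers of x below m are linearly independent over K
  have hpdeg : p.degree = (m : ℕ) := Polynomial.degree_eq_natDegree (minpoly.ne_zero hint)
  have hpow : ∀ k : Fin m → K,
      (∑ i : Fin m, (k i : D) * x ^ (i : ℕ)) = 0 → ∀ i, k i = 0 := by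
    intro k hsum
    by_contra hne
    push_neg at hne
    obtain ⟨i₀, hi₀⟩ := hne
    set q : Polynomial K := ∑ i : Fin m, Polynomial.C (k i) * Polynomial.X ^ (i : ℕ) with hq
    have hcoeff : ∀ j : Fin m, q.coeff (j : ℕ) = k j := by
      intro j
      rw [hq, Polynomial.finset_sum_coeff]
      rw [Finset.sum_eq_single j]
      · simp
      · intro b _ hbj
        rw [Polynomial.coeff_C_mul, Polynomial.coeff_X_pow, if_neg (by
          intro hbj'; exact hbj (Fin.ext hbj'.symm)), mul_zero]
      · simp
    have hq0 : q ≠ 0 := fun h0 => hi₀ (by rw [← hcoeff i₀, h0, Polynomial.coeff_zero])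
    have haq : Polynomial.aeval x q = 0 := by
      rw [hq]
      rw [map_sum]
      rw [← hsum]
      refine Finset.sum_congr rfl fun i _ => ?_
      rw [map_mul, map_pow, Polynomial.aeval_C, Polynomial.aeval_X]
      rfl
    have hdle := minpoly.degree_le_of_ne_zero K x hq0 haq
    have hqdeg : q.degree < (m : ℕ) := by
      rw [hq]
      refine lt_of_le_of_lt (Polynomial.degree_sum_le _ _) ?_
      rw [Finset.sup_lt_iff (by exact_mod_cast WithBot.bot_lt_coe (m : ℕ))]
      intro i _
      calc (Polynomial.C (k i) * Polynomial.X ^ (i : ℕ)).degree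
          ≤ (Polynomial.C (k i)).degree + (Polynomial.X ^ (i : ℕ) : Polynomial K).degree :=
            Polynomial.degree_mul_le _ _
        _ ≤ 0 + ((i : ℕ) : WithBot ℕ) :=
            add_le_add Polynomial.degree_C_le (le_of_eq (Polynomial.degree_X_pow _))
        _ = ((i : ℕ) : WithBot ℕ) := zero_add _
        _ < (m : WithBot ℕ) := by exact_mod_cast WithBot.coe_lt_coe.mpr i.2
    rw [← hp, hpdeg] at hdle
    exact absurd (lt_of_le_of_lt hdle hqdeg) (lt_irrefl _)
  -- the centralizer C of x
  set C := Subring.centralizer ({x} : Set D) with hC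
  have hxC : x ∈ C := Subring.mem_centralizer_iff.mpr (by rintro g rfl; rfl)
  -- inclusion of C into D as K-linear map
  let ι : C →ₗ[K] D :=
    { toFun := Subtype.val
      map_add' := fun _ _ => rfl
      map_smul' := fun _ _ => rfl }
  have hιinj : Function.Injective ι := Subtype.val_injective
  have hCfin : FiniteDimensional K C := FiniteDimensional.of_injective ι hιinj
  have hDCfin : Module.Finite C D := Module.Finite.of_restrictScalars_finite K C D
  -- m ≤ finrank K C
  have hmδ : m ≤ Module.finrank K C := by
    have hv : LinearIndependent K (fun i : Fin m => (⟨x ^ (i : ℕ), pow_mem hxC _⟩ : C)) := by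
      refine LinearIndependent.of_comp ι ?_
      rw [Fintype.linearIndependent_iff]
      intro g hg
      refine hpow g ?_
      rw [← hg]
      rfl
    simpa using hv.fintype_card_le_finrank
  -- tower formula
  have htower : Module.finrank K C * Module.finrank C D = d ^ 2 := by
    rw [Module.finrank_mul_finrank K C D, hfinrank]
  set t := Module.finrank C D with ht
  -- the submodule W of K-linear endomorphisms commuting with left mult by C
  set W : Submodule K (D →ₗ[K] D) :=
    { carrier := {f | ∀ (c : C) (u : D), f ((c : D) * u) = (c : D) * f u}
      add_mem' := fun hf hg c u => by
        simp only [LinearMap.add_apply, hf c u, hg c u, mul_add]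
      zero_mem' := fun c u => by simp
      smul_mem' := fun k f hf c u => by
        simp only [LinearMap.smul_apply, hf c u]
        have hk : (k : D) * ((c : D) * f u) = (c : D) * ((k : D) * f u) := by
          rw [← mul_assoc, ← Subring.mem_center_iff.mp k.2 (c : D), mul_assoc]
        show (k : D) * ((c : D) * f u) = (c : D) * ((k : D) * f u)
        exact hk } with hW
  -- basis of D over K
  set n := Module.finrank K D with hn
  obtain bD := Module.finBasis K D
  -- the family φ
  have hcommx : ∀ (c : C) (i : ℕ), x ^ i * (c : D) = (c : D) * x ^ i := by
    intro c i
    have hcx : Commute x (c : D) := Subring.mem_centralizer_iff.mp c.2 x rfl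
    exact (hcx.pow_left i).eq
  let φ : Fin m × Fin n → (D →ₗ[K] D) := fun pr =>
    { toFun := fun u => x ^ (pr.1 : ℕ) * u * bD pr.2
      map_add' := fun u v => by
        show x ^ (pr.1 : ℕ) * (u + v) * bD pr.2 = _ + _
        rw [mul_add, add_mul]
      map_smul' := fun k u => by
        show x ^ (pr.1 : ℕ) * ((k : D) * u) * bD pr.2 = (k : D) * (x ^ (pr.1 : ℕ) * u * bD pr.2)
        simp only [← mul_assoc]
        rw [Subring.mem_center_iff.mp k.2 (x ^ (pr.1 : ℕ))] }
  have hφW : ∀ pr, φ pr ∈ W := by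
    intro pr c u
    show x ^ (pr.1 : ℕ) * ((c : D) * u) * bD pr.2 = (c : D) * (x ^ (pr.1 : ℕ) * u * bD pr.2)
    simp only [← mul_assoc]
    rw [hcommx c]
  have hφind : LinearIndependent K φ := by
    rw [Fintype.linearIndependent_iff]
    intro g hg pr
    have hg' : ∀ u : D, ∑ i : Fin m, x ^ (i : ℕ) * u * (∑ j : Fin n, g (i, j) • bD j) = 0 := by
      intro u
      have := LinearMap.congr_fun hg u
      simp only [LinearMap.sum_apply, LinearMap.smul_apply, LinearMap.zero_apply] at this
      rw [← this, Fintype.sum_prod_type]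
      refine Finset.sum_congr rfl fun i _ => ?_
      rw [Finset.mul_sum]
      refine Finset.sum_congr rfl fun j _ => ?_
      show x ^ (i : ℕ) * u * ((g (i, j) : D) * bD j) = (g (i, j) : D) * (x ^ (i : ℕ) * u * bD j)
      rw [← mul_assoc, ← mul_assoc, ← mul_assoc,
        Subring.mem_center_iff.mp (g (i, j)).2 (x ^ (i : ℕ) * u),
        mul_assoc ((g (i, j)) : D) (x ^ (i : ℕ)) u]
    have hci := aw_aux x hpow _ _ le_rfl hg' pr.1
    have := Fintype.linearIndependent_iff.mp bD.linearIndependent (fun j => g (pr.1, j)) hci pr.2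
    exact this
  have hφWind : LinearIndependent K (fun pr => (⟨φ pr, hφW pr⟩ : W)) :=
    LinearIndependent.of_comp W.subtype hφind
  have hlow : m * n ≤ Module.finrank K W := by
    have := hφWind.fintype_card_le_finrank
    simpa [Fintype.card_prod] using this
  -- upper bound on finrank K W
  obtain bC := Module.finBasis C D
  let Φ : W →ₗ[K] (Fin t → D) :=
    { toFun := fun w j => (w : D →ₗ[K] D) (bC j)
      map_add' := fun u v => rfl
      map_smul' := fun k u => rfl }
  have hΦinj : Function.Injective Φ := by
    rw [injective_iff_map_eq_zero]
    rintro ⟨w, hw⟩ hker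
    have hval : ∀ j, w (bC j) = 0 := fun j => congrFun hker j
    have : w = 0 := by
      ext u
      have hrepr := bC.sum_repr u
      calc w u = w (∑ j : Fin t, bC.repr u j • bC j) := by rw [hrepr]
        _ = ∑ j : Fin t, w ((bC.repr u j : D) * bC j) := by rw [map_sum]; rfl
        _ = ∑ j : Fin t, (bC.repr u j : D) * w (bC j) := by
            exact Finset.sum_congr rfl fun j _ => hw (bC.repr u j) (bC j)
        _ = 0 := by simp [hval]
    simp [this]
  have hup : Module.finrank K W ≤ t * (d ^ 2) := by
    have h1 : Module.finrank K W ≤ Module.finrank K (Fin t → D) :=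
      LinearMap.finrank_le_finrank_of_injective hΦinj
    have h2 : Module.finrank K (Fin t → D) = t * (d ^ 2) := by
      rw [Module.finrank_pi_fintype, Finset.sum_const, Finset.card_univ, Fintype.card_fin,
        smul_eq_mul, ← hn, hfinrank]
    omega
  -- conclude
  have hnd : n = d ^ 2 := hfinrank
  have hmt : m ≤ t := by
    have : m * (d ^ 2) ≤ t * (d ^ 2) := by
      calc m * (d ^ 2) = m * n := by rw [hnd]
        _ ≤ Module.finrank K W := hlow
        _ ≤ t * (d ^ 2) := hup
    have hd2 : 0 < d ^ 2 := by positivity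
    exact Nat.le_of_mul_le_mul_right this hd2
  have hmm : m * m ≤ d ^ 2 := by
    calc m * m ≤ Module.finrank K C * t := Nat.mul_le_mul hmδ hmt
      _ = d ^ 2 := htower
  have : m ^ 2 ≤ d ^ 2 := by rw [pow_two]; exact hmm
  exact Nat.pow_le_pow_iff_left (by norm_num) |>.mp this
end
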